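/- Let Γ be a countably infinite group satisfying the descending chain condition, let E be an equivalence relation on a standard Borel space with at least two equivalence classes, and let λ be a countable limit ordinal. Then J^λ_Γ(E) is Borel bireducible with the countable product ∏_{α<λ} J^α_Γ(E) (the equivalence relation on the product of the domains of the J^α_Γ(E) for α < λ, given by coordinatewise equivalence). -/

import Mathlib

/-- The Γ-jump of an equivalence relation `E` on `X`. -/
def GammaJump (Γ : Type*) [Group Γ] {X : Type*} (E : X → X → Prop) :
    (Γ → X) → (Γ → X) → Prop :=
  fun x y => ∃ γ : Γ, ∀ α : Γ, E (x (γ⁻¹ * α)) (y α)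

/-- A (Borel) equivalence relation: a carrier with a σ-algebra and a binary relation. -/
structure BorelEqvRel : Type 2 where
  carrier : Type 1
  ms : MeasurableSpace carrier
  rel : carrier → carrier → Prop

/-- Borel reducibility between packaged equivalence relations. -/
def RedB (E F : BorelEqvRel) : Prop :=
  ∃ f : E.carrier → F.carrier, @Measurable _ _ E.ms F.ms f ∧
    ∀ x y, E.rel x y ↔ F.rel (f x) (f y)

/-- The Γ-jump of a packaged equivalence relation. -/
def jumpB (Γ : Type) [Group Γ] (R : BorelEqvRel) : BorelEqvRel where
  carrier := Γ → R.carrier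
  ms := @MeasurableSpace.pi _ _ (fun _ => R.ms)
  rel := GammaJump Γ R.rel

/-- The direct sum of a family of packaged equivalence relations. -/
def sumB {ι : Type 1} (f : ι → BorelEqvRel) : BorelEqvRel where
  carrier := Σ i : ι, (f i).carrier
  ms := letI := fun i => (f i).ms; inferInstance
  rel a b := ∃ (i : ι) (x y : (f i).carrier), (f i).rel x y ∧ a = ⟨i, x⟩ ∧ b = ⟨i, y⟩

/-- The product of a family of packaged equivalence relations: coordinatewise
equivalence on the product of the domains. -/
def prodB {ι : Type 1} (f : ι → BorelEqvRel) : BorelEqvRel where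
  carrier := ∀ i : ι, (f i).carrier
  ms := @MeasurableSpace.pi _ _ (fun i => (f i).ms)
  rel x y := ∀ i : ι, (f i).rel (x i) (y i)

/-- The iterated Γ-jumps of `E`: `J^0 = E`, `J^{α+1} = (J^α)^{[Γ]}`, and
`J^λ = (⊕_{α<λ} J^α)^{[Γ]}` for limit `λ`. -/
noncomputable def iterJump (Γ : Type) [Group Γ] (E : BorelEqvRel) (o : Ordinal) :
    BorelEqvRel :=
  Ordinal.limitRecOn o E (fun _ ih => jumpB Γ ih)
    (fun o _ ih => jumpB Γ (sumB (fun i : {β : Ordinal // β < o} => ih i.1 i.2)))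

section Helpers

variable {Γ : Type} [Group Γ]

/-- witness predicate for the jump -/
def Wit {X : Type*} (R : X → X → Prop) (γ : Γ) (u v : Γ → X) : Prop :=
  ∀ α, R (u (γ⁻¹ * α)) (v α)

lemma gammaJump_def {X : Type*} (R : X → X → Prop) (u v : Γ → X) :
    GammaJump Γ R u v ↔ ∃ γ : Γ, Wit R γ u v := Iff.rfl

variable {X : Type*} {R : X → X → Prop}

lemma wit_refl (hR : Equivalence R) (u : Γ → X) : Wit R (1 : Γ) u u := fun α => by
  simpa using hR.refl (u α)

lemma wit_comp (hR : Equivalence R) {γ δ : Γ} {u v z : Γ → X}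
    (h1 : Wit R γ u v) (h2 : Wit R δ v z) : Wit R (δ * γ) u z := fun α => by
  have e : (δ * γ)⁻¹ * α = γ⁻¹ * (δ⁻¹ * α) := by rw [mul_inv_rev, mul_assoc]
  rw [e]
  exact hR.trans (h1 (δ⁻¹ * α)) (h2 α)

lemma wit_inv (hR : Equivalence R) {γ : Γ} {u v : Γ → X}
    (h1 : Wit R γ u v) : Wit R γ⁻¹ v u := fun α => by
  have h := h1 (γ * α)
  rw [inv_mul_cancel_left] at h
  rw [inv_inv]
  exact hR.symm h

lemma equivalence_gammaJump (hR : Equivalence R) : Equivalence (GammaJump Γ R) := by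
  constructor
  · exact fun u => ⟨1, wit_refl hR u⟩
  · rintro u v ⟨γ, hw⟩; exact ⟨γ⁻¹, wit_inv hR hw⟩
  · rintro u v z ⟨γ, h1⟩ ⟨δ, h2⟩; exact ⟨δ * γ, wit_comp hR h1 h2⟩

end Helpers

section Packaged

variable {Γ : Type} [Group Γ]

lemma isEqv_jumpB {R : BorelEqvRel} (h : Equivalence R.rel) :
    Equivalence (jumpB Γ R).rel := equivalence_gammaJump h

lemma sumB_rel_fst {ι : Type 1} {f : ι → BorelEqvRel} {a b : (sumB f).carrier}
    (h : (sumB f).rel a b) : a.1 = b.1 := by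
  obtain ⟨i, x, y, _, rfl, rfl⟩ := h; rfl

lemma sumB_rel_mk_same {ι : Type 1} {f : ι → BorelEqvRel} {i : ι}
    {p q : (f i).carrier} :
    (sumB f).rel ⟨i, p⟩ ⟨i, q⟩ ↔ (f i).rel p q := by
  constructor
  · rintro ⟨j, x, y, hxy, h1, h2⟩
    injection h1 with e1 e2
    subst e1
    rw [eq_of_heq e2]
    injection h2 with e3 e4
    rw [e4]
    exact hxy
  · intro h; exact ⟨i, p, q, h, rfl, rfl⟩

lemma isEqv_sumB {ι : Type 1} {f : ι → BorelEqvRel} (h : ∀ i, Equivalence (f i).rel) :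
    Equivalence (sumB f).rel := by
  constructor
  · exact fun a => ⟨a.1, a.2, a.2, (h a.1).refl _, rfl, rfl⟩
  · rintro a b ⟨i, x, y, hxy, rfl, rfl⟩
    exact ⟨i, y, x, (h i).symm hxy, rfl, rfl⟩
  · rintro a b c ⟨i, x, y, hxy, rfl, rfl⟩ ⟨j, x', y', hxy', he, rfl⟩
    injection he with e1 e2
    subst e1
    rw [← eq_of_heq e2] at hxy'
    exact ⟨i, x, y', (h i).trans hxy hxy', rfl, rfl⟩

lemma measurable_sigmaMk' {α : Type*} {β : α → Type*} [m : ∀ a, MeasurableSpace (β a)]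
    (a : α) : Measurable (@Sigma.mk α β a) := fun s hs =>
  MeasurableSpace.map_def.mp (MeasurableSpace.measurableSet_iInf.mp hs a)

lemma measurable_sigma_dom {α : Type*} {β : α → Type*} [m : ∀ a, MeasurableSpace (β a)]
    {γ : Type*} [MeasurableSpace γ] {g : Sigma β → γ}
    (hg : ∀ a, Measurable fun x => g ⟨a, x⟩) : Measurable g := fun s hs =>
  MeasurableSpace.measurableSet_iInf.mpr fun a => MeasurableSpace.map_def.mpr (hg a hs)

lemma RedB.rfl {R : BorelEqvRel} : RedB R R := ⟨id, measurable_id, fun _ _ => Iff.rfl⟩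

lemma RedB.trans' {A B C : BorelEqvRel} (h1 : RedB A B) (h2 : RedB B C) : RedB A C := by
  obtain ⟨f, hf, hf2⟩ := h1
  obtain ⟨g, hg, hg2⟩ := h2
  exact ⟨g ∘ f, hg.comp hf, fun x y => (hf2 x y).trans (hg2 _ _)⟩

lemma redB_jumpB {A B : BorelEqvRel} (h : RedB A B) : RedB (jumpB Γ A) (jumpB Γ B) := by
  obtain ⟨f, hf, hf2⟩ := h
  refine ⟨fun u γ => f (u γ), ?_, ?_⟩
  · letI := A.ms; letI := B.ms
    show Measurable fun (u : Γ → A.carrier) (γ : Γ) => f (u γ)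
    exact measurable_pi_lambda _ fun γ => hf.comp (measurable_pi_apply γ)
  · intro u v
    exact exists_congr fun γ => forall_congr' fun α => hf2 _ _

lemma redB_const_jumpB {R : BorelEqvRel} (h : Equivalence R.rel) :
    RedB R (jumpB Γ R) := by
  letI := R.ms
  refine ⟨fun v _ => v, ?_, ?_⟩
  · show Measurable fun (v : R.carrier) (_ : Γ) => v
    exact measurable_pi_lambda _ fun _ => measurable_id
  intro x y
  constructor
  · intro hr; exact ⟨1, fun α => hr⟩
  · rintro ⟨γ, hw⟩; exact hw 1

end Packaged
section IterJump

variable (Γ : Type) [Group Γ] (E : BorelEqvRel)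

lemma iterJump_zero : iterJump Γ E 0 = E := Ordinal.limitRecOn_zero _ _ _

lemma iterJump_succ (o : Ordinal) :
    iterJump Γ E (Order.succ o) = jumpB Γ (iterJump Γ E o) :=
  Ordinal.limitRecOn_succ _ _ _ _

lemma iterJump_limit {o : Ordinal} (h : Order.IsSuccLimit o) :
    iterJump Γ E o =
      jumpB Γ (sumB fun i : {β : Ordinal // β < o} => iterJump Γ E i.1) :=
  Ordinal.limitRecOn_limit _ _ _ _ h

variable {E}

lemma iterJump_isEqv (hE : Equivalence E.rel) (o : Ordinal) :
    Equivalence (iterJump Γ E o).rel := by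
  induction o using Ordinal.limitRecOn with
  | zero => rw [iterJump_zero]; exact hE
  | add_one o ih => rw [Ordinal.add_one_eq_succ, iterJump_succ]; exact isEqv_jumpB ih
  | limit o ho ih =>
      rw [iterJump_limit Γ E ho]
      exact isEqv_jumpB (isEqv_sumB fun i => ih i.1 i.2)

lemma iterJump_nonempty (hne : Nonempty E.carrier) (o : Ordinal) :
    Nonempty (iterJump Γ E o).carrier := by
  induction o using Ordinal.limitRecOn with
  | zero => rw [iterJump_zero]; exact hne
  | add_one o ih => rw [Ordinal.add_one_eq_succ, iterJump_succ]; exact ⟨fun _ => ih.some⟩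
  | limit o ho ih =>
      rw [iterJump_limit Γ E ho]
      exact ⟨fun _ => ⟨⟨0, ho.pos⟩, (ih 0 ho.pos).some⟩⟩

lemma twoCl_jumpB {R : BorelEqvRel} (h : ∃ a b, ¬ R.rel a b) :
    ∃ a b, ¬ (jumpB Γ R).rel a b := by
  obtain ⟨a, b, hab⟩ := h
  refine ⟨fun _ => a, fun _ => b, ?_⟩
  rintro ⟨γ, hw⟩
  exact hab (hw 1)

lemma twoCl_sumB {ι : Type 1} {f : ι → BorelEqvRel} {i : ι}
    (h : ∃ a b, ¬ (f i).rel a b) : ∃ a b, ¬ (sumB f).rel a b := by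
  obtain ⟨a, b, hab⟩ := h
  exact ⟨⟨i, a⟩, ⟨i, b⟩, fun hr => hab (sumB_rel_mk_same.mp hr)⟩

lemma iterJump_twoCl (htwo : ∃ a b, ¬ E.rel a b) (o : Ordinal) :
    ∃ a b, ¬ (iterJump Γ E o).rel a b := by
  induction o using Ordinal.limitRecOn with
  | zero => rw [iterJump_zero]; exact htwo
  | add_one o ih => rw [Ordinal.add_one_eq_succ, iterJump_succ]; exact twoCl_jumpB Γ ih
  | limit o ho ih =>
      rw [iterJump_limit Γ E ho]
      exact twoCl_jumpB Γ (twoCl_sumB (i := ⟨0, ho.pos⟩) (ih 0 ho.pos))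

end IterJump

section Tcast

variable (Γ : Type) [Group Γ] (E : BorelEqvRel)

/-- transport of carriers along an equality of ordinals -/
def tcast {o o' : Ordinal} (h : o = o') (v : (iterJump Γ E o).carrier) :
    (iterJump Γ E o').carrier := h ▸ v

lemma tcast_rel {o o' : Ordinal} (h : o = o') (v w : (iterJump Γ E o).carrier) :
    (iterJump Γ E o').rel (tcast Γ E h v) (tcast Γ E h w) ↔
      (iterJump Γ E o).rel v w := by subst h; exact Iff.rfl

lemma measurable_tcast {o o' : Ordinal} (h : o = o') :
    @Measurable _ _ (iterJump Γ E o).ms (iterJump Γ E o').ms (tcast Γ E h) := by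
  subst h; exact measurable_id

end Tcast

section Qfun

variable {Γ : Type} [Group Γ] {Y : Type*} (R : Y → Y → Prop)

lemma jump_const_const (hR : Equivalence R) (c c' : Y) :
    GammaJump Γ R (fun _ => c) (fun _ => c') ↔ R c c' := by
  constructor
  · rintro ⟨γ, hw⟩; exact hw 1
  · intro h; exact ⟨1, fun α => h⟩

lemma jump_not_const (hR : Equivalence R) (u : Γ → Y) (α₁ α₂ : Γ)
    (h12 : ¬ R (u α₁) (u α₂)) (c : Y) : ¬ GammaJump Γ R u (fun _ => c) := by
  rintro ⟨γ, hw⟩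
  have h1 := hw (γ * α₁)
  have h2 := hw (γ * α₂)
  rw [inv_mul_cancel_left] at h1 h2
  exact h12 (hR.trans h1 (hR.symm h2))

lemma jump_not_const' (hR : Equivalence R) (u : Γ → Y) (α₁ α₂ : Γ)
    (h12 : ¬ R (u α₁) (u α₂)) (c : Y) : ¬ GammaJump Γ R (fun _ => c) u := by
  rintro ⟨γ, hw⟩
  exact h12 (hR.trans (hR.symm (hw α₁)) (hw α₂))

open Classical in
variable (Γ) in
/-- the tagged pattern used to embed a second copy into a jump -/
noncomputable def qfun (ga gb : Y) (s : Γ) (w : Y) : Γ → Y :=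
  fun γ => if γ = 1 then w else if γ = s then ga else gb

variable {R}

lemma qfun_one_val (ga gb : Y) (s : Γ) (w : Y) : qfun Γ ga gb s w 1 = w := by
  simp [qfun]

lemma qfun_s_val (ga gb : Y) {s : Γ} (hs : s ≠ 1) (w : Y) :
    qfun Γ ga gb s w s = ga := by simp [qfun, hs]

lemma qfun_other_val (ga gb : Y) {s t : Γ} (ht1 : t ≠ 1) (hts : t ≠ s) (w : Y) :
    qfun Γ ga gb s w t = gb := by simp [qfun, ht1, hts]

lemma qfun_jump_iff (hR : Equivalence R) {ga gb : Y} (hab : ¬ R ga gb)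
    {s : Γ} (hs : s ≠ 1) (w w' : Y) :
    GammaJump Γ R (qfun Γ ga gb s w) (qfun Γ ga gb s w') ↔ R w w' := by
  constructor
  · rintro ⟨γ, hw⟩
    by_cases hγ : γ = 1
    · have h0 := hw 1
      rw [hγ, inv_one, one_mul, qfun_one_val, qfun_one_val] at h0
      exact h0
    · have hws := hw s
      rw [qfun_s_val ga gb hs] at hws
      by_cases h1 : γ⁻¹ * s = 1
      · have hγinv : γ⁻¹ = s⁻¹ := eq_inv_of_mul_eq_one_left h1
        rw [h1, qfun_one_val] at hws
        by_cases hss : s * s = 1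
        · have hsinv : s⁻¹ = s := inv_eq_of_mul_eq_one_right hss
          have h2 := hw 1
          rw [mul_one, hγinv, hsinv, qfun_s_val ga gb hs, qfun_one_val] at h2
          exact hR.trans hws h2
        · have hss' : s * s ≠ s := fun h =>
            hs (mul_left_cancel (a := s) (by rw [h, mul_one]))
          have h2 := hw (s * s)
          rw [show γ⁻¹ * (s * s) = s by rw [hγinv, inv_mul_cancel_left],
            qfun_s_val ga gb hs, qfun_other_val ga gb hss hss'] at h2
          exact absurd h2 hab
      · have h2 : γ⁻¹ * s ≠ s := fun h =>
          hγ (inv_eq_one.mp (mul_eq_right.mp h))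
        rw [qfun_other_val ga gb h1 h2] at hws
        exact absurd (hR.symm hws) hab
  · intro h
    refine ⟨1, fun α => ?_⟩
    rw [inv_one, one_mul]
    unfold qfun
    split_ifs
    · exact h
    · exact hR.refl ga
    · exact hR.refl gb

lemma qfun_not_const (hR : Equivalence R) {ga gb : Y} (hab : ¬ R ga gb)
    {s t : Γ} (hs : s ≠ 1) (ht1 : t ≠ 1) (hts : t ≠ s) (w c : Y) :
    ¬ GammaJump Γ R (qfun Γ ga gb s w) (fun _ => c) := by
  apply jump_not_const R hR _ s t _ c
  rw [qfun_s_val ga gb hs, qfun_other_val ga gb ht1 hts]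
  exact hab

lemma const_not_qfun (hR : Equivalence R) {ga gb : Y} (hab : ¬ R ga gb)
    {s t : Γ} (hs : s ≠ 1) (ht1 : t ≠ 1) (hts : t ≠ s) (w c : Y) :
    ¬ GammaJump Γ R (fun _ => c) (qfun Γ ga gb s w) := by
  apply jump_not_const' R hR _ s t _ c
  rw [qfun_s_val ga gb hs, qfun_other_val ga gb ht1 hts]
  exact hab

end Qfun
section ClaimC

/-- the one-point equivalence relation -/
def deltaB : BorelEqvRel := ⟨PUnit.{2}, ⊤, fun _ _ => True⟩

/-- a family extended by one extra (trivial) summand -/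
def optRel {ι : Type 1} (f : ι → BorelEqvRel) : Option ι → BorelEqvRel :=
  fun o => o.elim deltaB f

lemma redB_sumB_optRel {ι : Type 1} (f : ι → BorelEqvRel) :
    RedB (sumB f) (sumB (optRel f)) := by
  letI := fun i => (f i).ms
  letI := fun o => (optRel f o).ms
  refine ⟨fun z => ⟨some z.1, z.2⟩, ?_, ?_⟩
  · show Measurable fun z : (Σ i : ι, (f i).carrier) =>
      (⟨some z.1, z.2⟩ : Σ o : Option ι, (optRel f o).carrier)
    exact measurable_sigma_dom fun a =>
      (measurable_sigmaMk' (β := fun o => (optRel f o).carrier) (some a))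
  · intro x y
    constructor
    · rintro ⟨i, p, q, hpq, rfl, rfl⟩
      exact ⟨some i, p, q, hpq, rfl, rfl⟩
    · intro h
      obtain ⟨i, p⟩ := x
      obtain ⟨j, q⟩ := y
      have hfst := sumB_rel_fst h
      simp only at hfst
      have : i = j := by injection hfst
      subst this
      exact ⟨i, p, q, sumB_rel_mk_same (f := optRel f) (i := some i) |>.mp h, rfl, rfl⟩

variable (Γ : Type) [Group Γ] (E : BorelEqvRel)

/-- the reduction map for the successor case of `claimC` -/
noncomputable def claimCmap (δ : Ordinal)
    (fC : (sumB (optRel (fun i : {β : Ordinal // β < δ} => iterJump Γ E i.1))).carrier →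
      (iterJump Γ E δ).carrier)
    (ga gb : (iterJump Γ E δ).carrier) (s : Γ) :
    (sumB (optRel (fun i : {β : Ordinal // β < Order.succ δ} =>
      iterJump Γ E i.1))).carrier → (Γ → (iterJump Γ E δ).carrier)
  | ⟨none, u⟩ => fun _ => fC ⟨none, u⟩
  | ⟨some i, v⟩ =>
      if h : i.1 < δ then (fun _ => fC ⟨some ⟨i.1, h⟩, v⟩)
      else qfun Γ ga gb s
        (tcast Γ E (le_antisymm (Order.lt_succ_iff.mp i.2) (not_lt.mp h)) v)

/-- the reduction map for the limit case of `claimC` -/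
noncomputable def claimCmapL (o : Ordinal)
    (a0 b0 : (iterJump Γ E (0 : Ordinal)).carrier) (s : Γ) (h0 : (0 : Ordinal) < o) :
    (sumB (optRel (fun i : {β : Ordinal // β < o} => iterJump Γ E i.1))).carrier →
      (Γ → (sumB (fun i : {β : Ordinal // β < o} => iterJump Γ E i.1)).carrier)
  | ⟨none, _⟩ => qfun Γ ⟨⟨0, h0⟩, a0⟩ ⟨⟨0, h0⟩, b0⟩ s ⟨⟨0, h0⟩, b0⟩
  | ⟨some i, v⟩ => fun _ => ⟨i, v⟩

variable [Infinite Γ] {E}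

lemma claimC (hE : Equivalence E.rel) (htwo : ∃ a b : E.carrier, ¬ E.rel a b)
    (o : Ordinal) :
    RedB (sumB (optRel (fun i : {β : Ordinal // β < o} => iterJump Γ E i.1)))
      (iterJump Γ E o) := by
  classical
  obtain ⟨s, hs⟩ := exists_ne (1 : Γ)
  obtain ⟨t, ht⟩ := Infinite.exists_notMem_finset ({1, s} : Finset Γ)
  simp only [Finset.mem_insert, Finset.mem_singleton, not_or] at ht
  obtain ⟨ht1, hts⟩ := ht
  induction o using Ordinal.limitRecOn with
  | zero =>
      rw [iterJump_zero]
      obtain ⟨a, b, hab⟩ := htwo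
      letI := fun (o' : Option {β : Ordinal // β < (0:Ordinal)}) =>
        (optRel (fun i : {β : Ordinal // β < (0:Ordinal)} => iterJump Γ E i.1) o').ms
      letI := E.ms
      refine ⟨fun _ => a, measurable_const, ?_⟩
      intro x y
      constructor
      · intro _; exact hE.refl a
      · intro _
        obtain ⟨o1, u⟩ := x
        obtain ⟨o2, v⟩ := y
        rcases o1 with _ | i
        · rcases o2 with _ | j
          · exact ⟨none, u, v, trivial, rfl, rfl⟩
          · exact absurd j.2 (not_lt_zero (a := _))
        · exact absurd i.2 (not_lt_zero (a := _))
  | add_one δ ih =>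
      rw [Ordinal.add_one_eq_succ, iterJump_succ]
      obtain ⟨fC, hfCm, hfCr⟩ := ih
      have hG : Equivalence (iterJump Γ E δ).rel := iterJump_isEqv Γ hE δ
      obtain ⟨ga, gb, hab⟩ := iterJump_twoCl Γ htwo δ
      refine ⟨claimCmap Γ E δ fC ga gb s, ?_, ?_⟩
      · -- measurability
        letI := fun (o' : Option {β : Ordinal // β < Order.succ δ}) =>
          (optRel (fun i : {β : Ordinal // β < Order.succ δ} => iterJump Γ E i.1) o').ms
        letI := (iterJump Γ E δ).ms
        letI := fun (o' : Option {β : Ordinal // β < δ}) =>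
          (optRel (fun i : {β : Ordinal // β < δ} => iterJump Γ E i.1) o').ms
        show Measurable fun z : (Σ o' : Option {β : Ordinal // β < Order.succ δ},
          (optRel (fun i : {β : Ordinal // β < Order.succ δ} => iterJump Γ E i.1) o').carrier) =>
          claimCmap Γ E δ fC ga gb s z
        apply measurable_sigma_dom
        intro o1
        rcases o1 with _ | i
        · simp only [claimCmap]
          exact measurable_pi_lambda _ fun _ =>
            hfCm.comp (measurable_sigmaMk' none)
        · by_cases h : i.1 < δ
          · simp only [claimCmap, dif_pos h]
            exact measurable_pi_lambda _ fun _ =>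
              hfCm.comp (measurable_sigmaMk'
                (β := fun o' => (optRel (fun i : {β : Ordinal // β < δ} =>
                  iterJump Γ E i.1) o').carrier) (some ⟨i.1, h⟩))
          · simp only [claimCmap, dif_neg h]
            apply measurable_pi_lambda
            intro γ
            simp only [qfun]
            by_cases hγ1 : γ = 1
            · simp only [if_pos hγ1]
              exact measurable_tcast Γ E _
            · simp only [if_neg hγ1]
              exact measurable_const
      · -- reduction property
        intro x y
        constructor
        · rintro ⟨o1, p, q, hpq, rfl, rfl⟩
          rcases o1 with _ | i
          · simp only [claimCmap]
            exact (jump_const_const _ hG _ _).mpr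
              (hfCr _ _ |>.mp ⟨none, p, q, trivial, rfl, rfl⟩)
          · by_cases h : i.1 < δ
            · simp only [claimCmap, dif_pos h]
              exact (jump_const_const _ hG _ _).mpr
                (hfCr _ _ |>.mp ⟨some ⟨i.1, h⟩, p, q, hpq, rfl, rfl⟩)
            · simp only [claimCmap, dif_neg h]
              exact (qfun_jump_iff hG hab hs _ _).mpr ((tcast_rel Γ E _ _ _).mpr hpq)
        · intro hjump
          obtain ⟨o1, p⟩ := x
          obtain ⟨o2, q⟩ := y
          rcases o1 with _ | i <;> rcases o2 with _ | j
          · exact ⟨none, p, q, trivial, rfl, rfl⟩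
          · by_cases h : j.1 < δ
            · simp only [claimCmap, dif_pos h] at hjump
              have := hfCr _ _ |>.mpr ((jump_const_const _ hG _ _).mp hjump)
              have hfst := sumB_rel_fst this
              simp at hfst
            · simp only [claimCmap, dif_neg h] at hjump
              exact absurd hjump (const_not_qfun hG hab hs ht1 hts _ _)
          · by_cases h : i.1 < δ
            · simp only [claimCmap, dif_pos h] at hjump
              have := hfCr _ _ |>.mpr ((jump_const_const _ hG _ _).mp hjump)
              have hfst := sumB_rel_fst this
              simp at hfst
            · simp only [claimCmap, dif_neg h] at hjump
              exact absurd hjump (qfun_not_const hG hab hs ht1 hts _ _)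
          · by_cases hi : i.1 < δ <;> by_cases hj : j.1 < δ
            · simp only [claimCmap, dif_pos hi, dif_pos hj] at hjump
              have hrel := hfCr _ _ |>.mpr ((jump_const_const _ hG _ _).mp hjump)
              have hfst := sumB_rel_fst hrel
              have hij : i = j := by
                simp only [Option.some.injEq, Subtype.mk.injEq] at hfst
                exact Subtype.ext hfst
              subst hij
              exact ⟨some i, p, q, sumB_rel_mk_same
                (f := optRel fun i : {β : Ordinal // β < δ} => iterJump Γ E i.1)
                (i := some ⟨i.1, hi⟩) |>.mp hrel, rfl, rfl⟩
            · simp only [claimCmap, dif_pos hi, dif_neg hj] at hjump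
              exact absurd hjump (const_not_qfun hG hab hs ht1 hts _ _)
            · simp only [claimCmap, dif_neg hi, dif_pos hj] at hjump
              exact absurd hjump (qfun_not_const hG hab hs ht1 hts _ _)
            · simp only [claimCmap, dif_neg hi, dif_neg hj] at hjump
              have hij : i = j := Subtype.ext
                ((le_antisymm (Order.lt_succ_iff.mp i.2) (not_lt.mp hi)).trans
                  (le_antisymm (Order.lt_succ_iff.mp j.2) (not_lt.mp hj)).symm)
              subst hij
              have hrel := (qfun_jump_iff hG hab hs _ _).mp hjump
              exact ⟨some i, p, q, (tcast_rel Γ E _ _ _).mp hrel, rfl, rfl⟩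
  | limit o ho ih =>
      clear ih
      rw [iterJump_limit Γ E ho]
      have hSeqv : Equivalence (sumB (fun i : {β : Ordinal // β < o} =>
          iterJump Γ E i.1)).rel :=
        isEqv_sumB fun i => iterJump_isEqv Γ hE i.1
      obtain ⟨a0, b0, hab0⟩ := iterJump_twoCl Γ htwo (0 : Ordinal)
      have hab : ¬ (sumB (fun i : {β : Ordinal // β < o} => iterJump Γ E i.1)).rel
          ⟨⟨0, ho.pos⟩, a0⟩ ⟨⟨0, ho.pos⟩, b0⟩ := fun h => hab0 (sumB_rel_mk_same
            (f := fun i : {β : Ordinal // β < o} => iterJump Γ E i.1)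
            (i := ⟨0, ho.pos⟩) |>.mp h)
      refine ⟨claimCmapL Γ E o a0 b0 s ho.pos, ?_, ?_⟩
      · letI := fun (o' : Option {β : Ordinal // β < o}) =>
          (optRel (fun i : {β : Ordinal // β < o} => iterJump Γ E i.1) o').ms
        letI := fun (i : {β : Ordinal // β < o}) => (iterJump Γ E i.1).ms
        letI := (sumB (fun i : {β : Ordinal // β < o} => iterJump Γ E i.1)).ms
        show Measurable fun z : (Σ o' : Option {β : Ordinal // β < o},
          (optRel (fun i : {β : Ordinal // β < o} => iterJump Γ E i.1) o').carrier) =>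
          claimCmapL Γ E o a0 b0 s ho.pos z
        apply measurable_sigma_dom
        intro o1
        rcases o1 with _ | i
        · simp only [claimCmapL]
          exact measurable_const
        · simp only [claimCmapL]
          exact measurable_pi_lambda _ fun _ => measurable_sigmaMk' i
      · intro x y
        constructor
        · rintro ⟨o1, p, q, hpq, rfl, rfl⟩
          rcases o1 with _ | i
          · exact ⟨1, wit_refl hSeqv _⟩
          · exact (jump_const_const _ hSeqv _ _).mpr (sumB_rel_mk_same.mpr hpq)
        · intro hjump
          obtain ⟨o1, p⟩ := x
          obtain ⟨o2, q⟩ := y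
          rcases o1 with _ | i <;> rcases o2 with _ | j
          · exact ⟨none, p, q, trivial, rfl, rfl⟩
          · exact absurd hjump (qfun_not_const hSeqv hab hs ht1 hts _ _)
          · exact absurd hjump (const_not_qfun hSeqv hab hs ht1 hts _ _)
          · have hrel := (jump_const_const _ hSeqv _ _).mp hjump
            have hfst := sumB_rel_fst hrel
            simp only [Option.some.injEq] at hfst
            have hij : i = j := hfst
            subst hij
            exact ⟨some i, p, q, sumB_rel_mk_same
              (f := fun i : {β : Ordinal // β < o} => iterJump Γ E i.1)
              (i := i) |>.mp hrel, rfl, rfl⟩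

end ClaimC
section Levels

variable (Γ : Type) [Group Γ] (E : BorelEqvRel)

/-- the direct sum of the iterated jumps below `δ` -/
noncomputable def levSum (δ : Ordinal) : BorelEqvRel :=
  sumB (fun i : {β : Ordinal // β < δ} => iterJump Γ E i.1)


/-- cutoff map: keep coordinates of index `< δ`, send the rest to a marker -/
noncomputable def cutMap (lam δ : Ordinal) (m : (iterJump Γ E δ).carrier)
    (z : (levSum Γ E lam).carrier) : (levSum Γ E (Order.succ δ)).carrier :=
  if h : z.1.1 < δ then ⟨⟨z.1.1, h.trans (Order.lt_succ δ)⟩, z.2⟩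
  else ⟨⟨δ, Order.lt_succ δ⟩, m⟩

variable {E}

lemma levSum_isEqv (hE : Equivalence E.rel) (δ : Ordinal) :
    Equivalence (levSum Γ E δ).rel :=
  isEqv_sumB fun i => iterJump_isEqv Γ hE i.1

lemma cut_rel_of_global (hE : Equivalence E.rel) {lam : Ordinal} (δ : Ordinal)
    (m : (iterJump Γ E δ).carrier) {u v : (levSum Γ E lam).carrier}
    (h : (levSum Γ E lam).rel u v) :
    (levSum Γ E (Order.succ δ)).rel (cutMap Γ E lam δ m u) (cutMap Γ E lam δ m v) := by
  obtain ⟨⟨a, ha⟩, p, q, hpq, rfl, rfl⟩ := h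
  simp only [cutMap]
  by_cases hd : a < δ
  · erw [dif_pos hd, dif_pos hd]
    exact sumB_rel_mk_same.mpr hpq
  · erw [dif_neg hd, dif_neg hd]
    exact sumB_rel_mk_same.mpr ((iterJump_isEqv Γ hE δ).refl m)

lemma cut_rel_mono (hE : Equivalence E.rel) {lam : Ordinal} {δ δ' : Ordinal}
    (hδδ' : δ ≤ δ') (m : (iterJump Γ E δ).carrier) (m' : (iterJump Γ E δ').carrier)
    {u v : (levSum Γ E lam).carrier}
    (h : (levSum Γ E (Order.succ δ')).rel (cutMap Γ E lam δ' m' u)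
      (cutMap Γ E lam δ' m' v)) :
    (levSum Γ E (Order.succ δ)).rel (cutMap Γ E lam δ m u) (cutMap Γ E lam δ m v) := by
  obtain ⟨⟨a, ha⟩, p⟩ := u
  obtain ⟨⟨b, hb⟩, q⟩ := v
  simp only [cutMap] at h ⊢
  by_cases hu' : a < δ' <;> by_cases hv' : b < δ'
  · erw [dif_pos hu', dif_pos hv'] at h
    have hfst := sumB_rel_fst h
    simp only [Subtype.mk.injEq] at hfst
    have hab : a = b := hfst
    subst hab
    have hpq := sumB_rel_mk_same
      (f := fun i : {β : Ordinal // β < Order.succ δ'} => iterJump Γ E i.1)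
      (i := ⟨a, hu'.trans (Order.lt_succ δ')⟩) |>.mp h
    by_cases hd : a < δ
    · erw [dif_pos hd, dif_pos hd]
      exact sumB_rel_mk_same.mpr hpq
    · erw [dif_neg hd, dif_neg hd]
      exact sumB_rel_mk_same.mpr ((iterJump_isEqv Γ hE δ).refl m)
  · erw [dif_pos hu', dif_neg hv'] at h
    have hfst := sumB_rel_fst h
    simp only [Subtype.mk.injEq] at hfst
    exact absurd (hfst ▸ hu') (lt_irrefl δ')
  · erw [dif_neg hu', dif_pos hv'] at h
    have hfst := sumB_rel_fst h
    simp only [Subtype.mk.injEq] at hfst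
    exact absurd (hfst ▸ hv') (lt_irrefl δ')
  · have hu : ¬ a < δ := fun hc => hu' (hc.trans_le hδδ')
    have hv : ¬ b < δ := fun hc => hv' (hc.trans_le hδδ')
    erw [dif_neg hu, dif_neg hv]
    exact sumB_rel_mk_same.mpr ((iterJump_isEqv Γ hE δ).refl m)

lemma global_of_cut {lam : Ordinal} (δ : Ordinal)
    (m : (iterJump Γ E δ).carrier) {u v : (levSum Γ E lam).carrier}
    (hu : u.1.1 < δ) (hv : v.1.1 < δ)
    (h : (levSum Γ E (Order.succ δ)).rel (cutMap Γ E lam δ m u)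
      (cutMap Γ E lam δ m v)) : (levSum Γ E lam).rel u v := by
  obtain ⟨⟨a, ha⟩, p⟩ := u
  obtain ⟨⟨b, hb⟩, q⟩ := v
  simp only [cutMap] at h
  simp only at hu hv
  erw [dif_pos hu, dif_pos hv] at h
  have hfst := sumB_rel_fst h
  simp only [Subtype.mk.injEq] at hfst
  have hab : a = b := hfst
  subst hab
  have hpq := sumB_rel_mk_same
    (f := fun i : {β : Ordinal // β < Order.succ δ} => iterJump Γ E i.1)
    (i := ⟨a, hu.trans (Order.lt_succ δ)⟩) |>.mp h
  exact ⟨⟨a, ha⟩, p, q, hpq, rfl, rfl⟩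

variable {Γ}

/-- the stabilizer subgroup of a point under the shift action, up to `R` -/
def witStab {X : Type*} (R : X → X → Prop) (hR : Equivalence R) (u : Γ → X) :
    Subgroup Γ where
  carrier := {γ : Γ | Wit R γ u u}
  one_mem' := wit_refl hR u
  mul_mem' := fun {a b} ha hb => wit_comp hR hb ha
  inv_mem' := fun {a} ha => wit_inv hR ha

lemma mem_witStab {X : Type*} {R : X → X → Prop} {hR : Equivalence R} {u : Γ → X}
    {γ : Γ} : γ ∈ witStab R hR u ↔ Wit R γ u u := Iff.rfl

lemma dcc_stab (hdcc : ¬ ∃ H : ℕ → Subgroup Γ, ∀ n, H (n + 1) < H n)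
    {I : Type*} [Preorder I] [Nonempty I] (T : I → Subgroup Γ)
    (hmono : ∀ ⦃i j : I⦄, i ≤ j → T j ≤ T i) :
    ∃ i0 : I, ∀ j : I, i0 ≤ j → T j = T i0 := by
  by_contra hcon
  push_neg at hcon
  choose g hg1 hg2 using hcon
  apply hdcc
  refine ⟨fun n => T (g^[n + 1] (Classical.arbitrary I)), fun n => ?_⟩
  have e : g^[n + 1 + 1] (Classical.arbitrary I) =
      g (g^[n + 1] (Classical.arbitrary I)) := Function.iterate_succ_apply' g (n + 1) _
  show T (g^[n + 1 + 1] (Classical.arbitrary I)) < T (g^[n + 1] (Classical.arbitrary I))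
  rw [e]
  exact lt_of_le_of_ne (hmono (hg1 _)) (hg2 _)

variable (Γ)

lemma exists_global_wit (hdcc : ¬ ∃ H : ℕ → Subgroup Γ, ∀ n, H (n + 1) < H n)
    (hE : Equivalence E.rel) {lam : Ordinal} (hlim : Order.IsSuccLimit lam)
    (m : ∀ δ : Ordinal, (iterJump Γ E δ).carrier)
    (x y : Γ → (levSum Γ E lam).carrier)
    (h : ∀ δ : Ordinal, δ < lam → ∃ γ : Γ,
      Wit (levSum Γ E (Order.succ δ)).rel γ
        (fun α => cutMap Γ E lam δ (m δ) (x α)) (fun α => cutMap Γ E lam δ (m δ) (y α))) :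
    ∃ γ : Γ, Wit (levSum Γ E lam).rel γ x y := by
  haveI : Nonempty {β : Ordinal // β < lam} := ⟨⟨0, hlim.pos⟩⟩
  set I := {β : Ordinal // β < lam}
  have hEq : ∀ δ : Ordinal, Equivalence (levSum Γ E (Order.succ δ)).rel :=
    fun δ => levSum_isEqv Γ hE _
  let cx : ∀ d : I, Γ → (levSum Γ E (Order.succ d.1)).carrier :=
    fun d α => cutMap Γ E lam d.1 (m d.1) (x α)
  let cy : ∀ d : I, Γ → (levSum Γ E (Order.succ d.1)).carrier :=
    fun d α => cutMap Γ E lam d.1 (m d.1) (y α)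
  let T : I → Subgroup Γ := fun d => witStab _ (hEq d.1) (cx d)
  have hmono : ∀ ⦃d d' : I⦄, d ≤ d' → T d' ≤ T d := by
    intro d d' hdd' γ hγ
    exact fun α => cut_rel_mono Γ hE hdd' (m d.1) (m d'.1) (hγ α)
  obtain ⟨d0, hst⟩ := dcc_stab hdcc T hmono
  obtain ⟨γ0, hγ0⟩ := h d0.1 d0.2
  have key : ∀ d : I, Wit (levSum Γ E (Order.succ d.1)).rel γ0 (cx d) (cy d) := by
    intro d
    rcases le_total d d0 with hle | hge
    · exact fun α => cut_rel_mono Γ hE hle (m d.1) (m d0.1) (hγ0 α)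
    · obtain ⟨γd, hγd⟩ := h d.1 d.2
      have hγd0 : Wit (levSum Γ E (Order.succ d0.1)).rel γd (cx d0) (cy d0) :=
        fun α => cut_rel_mono Γ hE hge (m d0.1) (m d.1) (hγd α)
      have hσ : Wit (levSum Γ E (Order.succ d0.1)).rel (γd⁻¹ * γ0) (cx d0) (cx d0) :=
        wit_comp (hEq d0.1) hγ0 (wit_inv (hEq d0.1) hγd0)
      have hmem : (γd⁻¹ * γ0) ∈ T d0 := hσ
      rw [← hst d hge] at hmem
      have hfin := wit_comp (hEq d.1) (hmem : Wit _ _ (cx d) (cx d)) hγd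
      rwa [mul_inv_cancel_left] at hfin
  refine ⟨γ0, fun α => ?_⟩
  set z := x (γ0⁻¹ * α) with hz
  set w := y α with hw
  have hmax : Order.succ (max z.1.1 w.1.1) < lam :=
    hlim.succ_lt (max_lt (x (γ0⁻¹ * α)).1.2 (y α).1.2)
  have hzlt : z.1.1 < Order.succ (max z.1.1 w.1.1) :=
    (le_max_left _ _).trans_lt (Order.lt_succ _)
  have hwlt : w.1.1 < Order.succ (max z.1.1 w.1.1) :=
    (le_max_right _ _).trans_lt (Order.lt_succ _)
  exact global_of_cut Γ _ (m _) hzlt hwlt (key ⟨_, hmax⟩ α)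

end Levels
section Red1

lemma ord_succ_inj {a b : Ordinal} (h : Order.succ a = Order.succ b) : a = b :=
  Order.succ_injective h

variable (Γ : Type) [Group Γ] (E : BorelEqvRel)

lemma measurable_cutMap (lam δ : Ordinal) (m : (iterJump Γ E δ).carrier) :
    @Measurable _ _ (levSum Γ E lam).ms (levSum Γ E (Order.succ δ)).ms
      (cutMap Γ E lam δ m) := by
  letI := fun (i : {β : Ordinal // β < lam}) => (iterJump Γ E i.1).ms
  letI := fun (i : {β : Ordinal // β < Order.succ δ}) => (iterJump Γ E i.1).ms
  letI := (levSum Γ E (Order.succ δ)).ms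
  letI := (levSum Γ E lam).ms
  show Measurable fun z : (Σ i : {β : Ordinal // β < lam}, (iterJump Γ E i.1).carrier)
    => (cutMap Γ E lam δ m z :
      Σ i : {β : Ordinal // β < Order.succ δ}, (iterJump Γ E i.1).carrier)
  apply measurable_sigma_dom
  intro i
  by_cases h : i.1 < δ
  · simp only [cutMap, dif_pos h]
    have e : (Sigma.mk (β := fun i : {β : Ordinal // β < Order.succ δ} => (iterJump Γ E i.1).carrier)
        ⟨i.1, h.trans (Order.lt_succ δ)⟩) = (fun x => cutMap Γ E lam δ m ⟨i, x⟩) :=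
      funext fun x => by unfold cutMap; erw [dif_pos h]
    exact (show Measurable fun x => cutMap Γ E lam δ m ⟨i, x⟩ from e ▸ measurable_sigmaMk'
      (β := fun i : {β : Ordinal // β < Order.succ δ} => (iterJump Γ E i.1).carrier)
      ⟨i.1, h.trans (Order.lt_succ δ)⟩)
  · simp only [cutMap, dif_neg h]
    have e : (fun _ => (⟨⟨δ, Order.lt_succ δ⟩, m⟩ : (levSum Γ E (Order.succ δ)).carrier)) =
        (fun x => cutMap Γ E lam δ m ⟨i, x⟩) :=
      funext fun x => by unfold cutMap; erw [dif_neg h]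
    exact (show Measurable fun x => cutMap Γ E lam δ m ⟨i, x⟩ from e ▸ measurable_const)

open Classical in
/-- the coordinate map for the reduction of `J^λ` into the product -/
noncomputable def red1map (lam : Ordinal)
    (m : ∀ δ : Ordinal, (iterJump Γ E δ).carrier)
    (g : ∀ δ : Ordinal, (Γ → (levSum Γ E (Order.succ δ)).carrier) →
      (iterJump Γ E (Order.succ (Order.succ δ))).carrier)
    (x : Γ → (levSum Γ E lam).carrier) (i : {β : Ordinal // β < lam}) :
    (iterJump Γ E i.1).carrier :=
  if h : ∃ δ : Ordinal, i.1 = Order.succ (Order.succ δ) then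
    tcast Γ E h.choose_spec.symm
      (g h.choose (fun γ => cutMap Γ E lam h.choose (m h.choose) (x γ)))
  else m i.1

lemma red1aux (lam : Ordinal)
    (m : ∀ δ : Ordinal, (iterJump Γ E δ).carrier)
    (g : ∀ δ : Ordinal, (Γ → (levSum Γ E (Order.succ δ)).carrier) →
      (iterJump Γ E (Order.succ (Order.succ δ))).carrier)
    (hgi : ∀ δ : Ordinal, ∀ u v, (jumpB Γ (levSum Γ E (Order.succ δ))).rel u v ↔
      (iterJump Γ E (Order.succ (Order.succ δ))).rel (g δ u) (g δ v))
    (x y : Γ → (levSum Γ E lam).carrier) (i : {β : Ordinal // β < lam})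
    (δ : Ordinal) (hδ : i.1 = Order.succ (Order.succ δ)) :
    (iterJump Γ E i.1).rel
        (tcast Γ E hδ.symm (g δ (fun γ => cutMap Γ E lam δ (m δ) (x γ))))
        (tcast Γ E hδ.symm (g δ (fun γ => cutMap Γ E lam δ (m δ) (y γ)))) ↔
      ∃ γ : Γ, Wit (levSum Γ E (Order.succ δ)).rel γ
        (fun α => cutMap Γ E lam δ (m δ) (x α))
        (fun α => cutMap Γ E lam δ (m δ) (y α)) := by
  obtain ⟨ival, hival⟩ := i
  simp only at hδ
  subst hδ
  exact (tcast_rel Γ E _ _ _).trans ((hgi δ _ _).symm)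

variable [Infinite Γ] {E}

lemma red1 (hdcc : ¬ ∃ H : ℕ → Subgroup Γ, ∀ n, H (n + 1) < H n)
    (hE : Equivalence E.rel) (htwo : ∃ a b : E.carrier, ¬ E.rel a b)
    {lam : Ordinal} (hlim : Order.IsSuccLimit lam) :
    RedB (iterJump Γ E lam)
      (prodB fun i : {β : Ordinal // β < lam} => iterJump Γ E i.1) := by
  classical
  have hne : Nonempty E.carrier := ⟨htwo.choose⟩
  let m : ∀ δ : Ordinal, (iterJump Γ E δ).carrier :=
    fun δ => Classical.choice (iterJump_nonempty Γ hne δ)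
  have hlev : ∀ δ : Ordinal, RedB (jumpB Γ (levSum Γ E (Order.succ δ)))
      (iterJump Γ E (Order.succ (Order.succ δ))) := by
    intro δ
    rw [iterJump_succ Γ E (Order.succ δ)]
    exact redB_jumpB (RedB.trans' (redB_sumB_optRel _) (claimC Γ hE htwo (Order.succ δ)))
  choose g hgm hgi using hlev
  rw [iterJump_limit Γ E hlim]
  refine ⟨fun x => red1map Γ E lam m g x, ?_, ?_⟩
  · -- measurability
    letI := fun (i : {β : Ordinal // β < lam}) => (iterJump Γ E i.1).ms
    letI := (levSum Γ E lam).ms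
    letI := fun (δ : Ordinal) => (levSum Γ E (Order.succ δ)).ms
    show Measurable fun (x : Γ → (levSum Γ E lam).carrier)
      (i : {β : Ordinal // β < lam}) => red1map Γ E lam m g x i
    apply measurable_pi_lambda
    intro i
    by_cases h : ∃ δ : Ordinal, i.1 = Order.succ (Order.succ δ)
    · simp only [red1map, dif_pos h]
      exact (measurable_tcast Γ E _).comp ((hgm h.choose).comp
        (measurable_pi_lambda _ fun γ =>
          (measurable_cutMap Γ E lam h.choose (m h.choose)).comp
            (measurable_pi_apply γ)))
    · simp only [red1map, dif_neg h]
      exact measurable_const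
  · -- reduction
    intro x y
    constructor
    · rintro ⟨γ, hw⟩ i
      by_cases h : ∃ δ : Ordinal, i.1 = Order.succ (Order.succ δ)
      · show (iterJump Γ E i.1).rel (red1map Γ E lam m g x i) (red1map Γ E lam m g y i)
        simp only [red1map, dif_pos h]
        exact (red1aux Γ E lam m g hgi x y i h.choose h.choose_spec).mpr
          ⟨γ, fun α => cut_rel_of_global Γ hE h.choose (m h.choose) (hw α)⟩
      · show (iterJump Γ E i.1).rel (red1map Γ E lam m g x i) (red1map Γ E lam m g y i)
        simp only [red1map, dif_neg h]
        exact (iterJump_isEqv Γ hE i.1).refl _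
    · intro hall
      refine exists_global_wit Γ hdcc hE hlim m x y ?_
      intro δ hδ
      have hi : Order.succ (Order.succ δ) < lam := hlim.succ_lt (hlim.succ_lt hδ)
      have h : ∃ δ' : Ordinal, (⟨Order.succ (Order.succ δ), hi⟩ :
          {β : Ordinal // β < lam}).1 = Order.succ (Order.succ δ') := ⟨δ, rfl⟩
      have hcomp := hall ⟨Order.succ (Order.succ δ), hi⟩
      show ∃ γ : Γ, Wit (levSum Γ E (Order.succ δ)).rel γ
        (fun α => cutMap Γ E lam δ (m δ) (x α)) (fun α => cutMap Γ E lam δ (m δ) (y α))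
      have hcomp' : (iterJump Γ E (⟨Order.succ (Order.succ δ), hi⟩ :
          {β : Ordinal // β < lam}).1).rel
          (red1map Γ E lam m g x ⟨Order.succ (Order.succ δ), hi⟩)
          (red1map Γ E lam m g y ⟨Order.succ (Order.succ δ), hi⟩) := hcomp
      simp only [red1map, dif_pos h] at hcomp'
      have hkey := (red1aux Γ E lam m g hgi x y _ h.choose h.choose_spec).mp hcomp'
      have he : h.choose = δ := by
        have h2 := h.choose_spec
        simp only at h2
        exact (ord_succ_inj (ord_succ_inj h2)).symm
      rw [he] at hkey
      exact hkey

end Red1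
section Red2


variable (Γ : Type) [Group Γ] (E : BorelEqvRel)

open Classical in
/-- the reduction map of the product into `J^λ` -/
noncomputable def red2map (lam : Ordinal) (e : {β : Ordinal // β < lam} → Γ)
    (m0 : (iterJump Γ E (0 : Ordinal)).carrier) (h0 : (0 : Ordinal) < lam)
    (z : ∀ i : {β : Ordinal // β < lam}, (iterJump Γ E i.1).carrier) (γ : Γ) :
    (levSum Γ E lam).carrier :=
  if h : ∃ i : {β : Ordinal // β < lam}, e i = γ then ⟨h.choose, z h.choose⟩
  else ⟨⟨0, h0⟩, m0⟩

variable {E}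

lemma red2 [Countable Γ] [Infinite Γ]
    (hE : Equivalence E.rel) (htwo : ∃ a b : E.carrier, ¬ E.rel a b)
    {lam : Ordinal} (hlim : Order.IsSuccLimit lam) (hcount : lam.card ≤ Cardinal.aleph0) :
    RedB (prodB fun i : {β : Ordinal // β < lam} => iterJump Γ E i.1)
      (iterJump Γ E lam) := by
  classical
  have hne : Nonempty E.carrier := ⟨htwo.choose⟩
  set m0 : (iterJump Γ E (0 : Ordinal)).carrier :=
    Classical.choice (iterJump_nonempty Γ hne 0) with hm0
  -- build an injection of the index set into Γ
  haveI hct : Countable lam.ToType :=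
    Cardinal.mk_le_aleph0_iff.mp (by rw [Cardinal.mk_toType]; exact hcount)
  haveI hctI : Countable {β : Ordinal // β < lam} :=
    Countable.of_equiv _ (Ordinal.ToType.mk (o := lam)).toEquiv.symm
  obtain ⟨f, hf⟩ := exists_injective_nat {β : Ordinal // β < lam}
  let nemb := Infinite.natEmbedding Γ
  set e : {β : Ordinal // β < lam} → Γ := fun i => nemb (f i) with hedef
  have he : Function.Injective e := nemb.injective.comp hf
  have h1lam : (1 : Ordinal) < lam := by
    have h := hlim.succ_lt hlim.pos
    rwa [Ordinal.succ_zero] at h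
  rw [iterJump_limit Γ E hlim]
  refine ⟨fun z γ => red2map Γ E lam e m0 hlim.pos z γ, ?_, ?_⟩
  · -- measurability
    letI := fun (i : {β : Ordinal // β < lam}) => (iterJump Γ E i.1).ms
    letI := (levSum Γ E lam).ms
    show Measurable fun (z : ∀ i : {β : Ordinal // β < lam}, (iterJump Γ E i.1).carrier)
      (γ : Γ) => red2map Γ E lam e m0 hlim.pos z γ
    apply measurable_pi_lambda
    intro γ
    by_cases h : ∃ i : {β : Ordinal // β < lam}, e i = γ
    · simp only [red2map, dif_pos h]
      have hfe : (fun c : (∀ i : {β : Ordinal // β < lam}, (iterJump Γ E i.1).carrier) =>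
          (⟨h.choose, c h.choose⟩ : Σ i : {β : Ordinal // β < lam}, (iterJump Γ E i.1).carrier)) =
          (fun c => red2map Γ E lam e m0 hlim.pos c γ) :=
        funext fun c => by unfold red2map; erw [dif_pos h]
      exact (show Measurable fun c => red2map Γ E lam e m0 hlim.pos c γ from hfe ▸
        (show Measurable fun c : (∀ i : {β : Ordinal // β < lam}, (iterJump Γ E i.1).carrier) =>
          (⟨h.choose, c h.choose⟩ : Σ i : {β : Ordinal // β < lam}, (iterJump Γ E i.1).carrier)
          from (measurable_sigmaMk'
        (β := fun i : {β : Ordinal // β < lam} => (iterJump Γ E i.1).carrier)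
        h.choose).comp (measurable_pi_apply h.choose)))
    · simp only [red2map, dif_neg h]
      have hfe : (fun _ : (∀ i : {β : Ordinal // β < lam}, (iterJump Γ E i.1).carrier) =>
          (⟨⟨0, hlim.pos⟩, m0⟩ : (levSum Γ E lam).carrier)) =
          (fun c => red2map Γ E lam e m0 hlim.pos c γ) :=
        funext fun c => by unfold red2map; erw [dif_neg h]
      exact (show Measurable fun c => red2map Γ E lam e m0 hlim.pos c γ from hfe ▸ measurable_const)
  · -- reduction
    intro z z'
    constructor
    · intro hall
      refine ⟨1, fun α => ?_⟩
      rw [inv_one, one_mul]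
      show (levSum Γ E lam).rel (red2map Γ E lam e m0 hlim.pos z α)
        (red2map Γ E lam e m0 hlim.pos z' α)
      by_cases h : ∃ i : {β : Ordinal // β < lam}, e i = α
      · simp only [red2map, dif_pos h]
        erw [dif_pos h, dif_pos h]
        exact sumB_rel_mk_same.mpr (hall h.choose)
      · simp only [red2map, dif_neg h]
        erw [dif_neg h, dif_neg h]
        exact sumB_rel_mk_same.mpr ((iterJump_isEqv Γ hE 0).refl m0)
    · rintro ⟨γ, hw⟩
      have hwi1 := hw (e ⟨1, h1lam⟩)
      have hex : ∃ i : {β : Ordinal // β < lam}, e i = e ⟨1, h1lam⟩ := ⟨⟨1, h1lam⟩, rfl⟩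
      have hc1 : hex.choose = ⟨1, h1lam⟩ := he hex.choose_spec
      simp only [red2map] at hwi1
      erw [dif_pos hex] at hwi1
      by_cases h2 : ∃ i : {β : Ordinal // β < lam}, e i = γ⁻¹ * e ⟨1, h1lam⟩
      · erw [dif_pos h2] at hwi1
        have hfst := sumB_rel_fst hwi1
        simp only at hfst
        have hch : h2.choose = ⟨1, h1lam⟩ := by rw [hfst, hc1]
        have hγeq : γ⁻¹ * e ⟨1, h1lam⟩ = e ⟨1, h1lam⟩ := by
          rw [← h2.choose_spec, hch]
        have hγ1 : γ = 1 := inv_eq_one.mp (mul_eq_right.mp hγeq)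
        subst hγ1
        intro i
        have hwi := hw (e i)
        rw [inv_one, one_mul] at hwi
        have hexi : ∃ j : {β : Ordinal // β < lam}, e j = e i := ⟨i, rfl⟩
        simp only [red2map] at hwi
        erw [dif_pos hexi, dif_pos hexi] at hwi
        have hci : hexi.choose = i := he hexi.choose_spec
        rw [hci] at hwi
        exact sumB_rel_mk_same
          (f := fun i : {β : Ordinal // β < lam} => iterJump Γ E i.1)
          (i := i) |>.mp hwi
      · erw [dif_neg h2] at hwi1
        have hfst := sumB_rel_fst hwi1
        simp only at hfst
        rw [hc1] at hfst
        simp only [Subtype.mk.injEq] at hfst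
        exact absurd hfst zero_ne_one

end Red2

theorem iterJump_limit_bireducible_prod'
    (Γ : Type) [Group Γ] [Countable Γ] [Infinite Γ]
    (hdcc : ¬ ∃ H : ℕ → Subgroup Γ, ∀ n, H (n + 1) < H n)
    (E : BorelEqvRel)
    (hE : Equivalence E.rel) (htwo : ∃ a b : E.carrier, ¬ E.rel a b)
    (lam : Ordinal) (hlim : Order.IsSuccLimit lam) (hcount : lam.card ≤ Cardinal.aleph0) :
    RedB (iterJump Γ E lam)
        (prodB (fun i : {β : Ordinal // β < lam} => iterJump Γ E i.1)) ∧
      RedB (prodB (fun i : {β : Ordinal // β < lam} => iterJump Γ E i.1))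
        (iterJump Γ E lam) :=
  ⟨red1 Γ hdcc hE htwo hlim, red2 Γ hE htwo hlim hcount⟩
/-- Let `Γ` be a countably infinite group satisfying the descending
chain condition, `E` an equivalence relation on a standard Borel space with at least
two classes, and `λ` a countable limit ordinal.  Then `J^λ_Γ(E)` is Borel bireducible
with the countable product `∏_{α<λ} J^α_Γ(E)`. -/
theorem iterJump_limit_bireducible_prod
    (Γ : Type) [Group Γ] [Countable Γ] [Infinite Γ]
    (hdcc : ¬ ∃ H : ℕ → Subgroup Γ, ∀ n, H (n + 1) < H n)
    (E : BorelEqvRel) (hsb : @StandardBorelSpace E.carrier E.ms)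
    (hE : Equivalence E.rel) (htwo : ∃ a b : E.carrier, ¬ E.rel a b)
    (lam : Ordinal) (hlim : Order.IsSuccLimit lam) (hcount : lam.card ≤ Cardinal.aleph0) :
    RedB (iterJump Γ E lam)
        (prodB (fun i : {β : Ordinal // β < lam} => iterJump Γ E i.1)) ∧
      RedB (prodB (fun i : {β : Ordinal // β < lam} => iterJump Γ E i.1))
        (iterJump Γ E lam) := by
  exact iterJump_limit_bireducible_prod' Γ hdcc E hE htwo lam hlim hcount
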